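/- For λ>0, ε>0 with √λ < ε, the function h(x) = x²/2 + λ·log(1 + |x|/ε) on ℝ is α-strongly convex with α = 1 - λ/ε², i.e., for all x, y ∈ ℝ and any subgradient g of h at x, h(y) ≥ h(x) + g·(y - x) + (α/2)(y - x)². -/

import Mathlib

noncomputable def psiAux (u : ℝ) : ℝ := u ^ 2 / 2 + Real.log (1 + u)

lemma psiAux_hasDeriv {u : ℝ} (hu : -1 < u) :
    HasDerivAt psiAux (u + (1 + u)⁻¹) u := by
  have h1 : (1 : ℝ) + u ≠ 0 := by linarith
  have hlog : HasDerivAt (fun v : ℝ => Real.log (1 + v)) (1 / (1 + u)) u :=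
    ((hasDerivAt_id u).const_add 1).log h1
  have hsq : HasDerivAt (fun v : ℝ => v ^ 2 / 2) u u := by
    have := (hasDerivAt_pow 2 u).div_const 2
    simpa using this
  have := hsq.add hlog
  rw [one_div] at this
  exact this

lemma deriv_formula_hasDeriv {u : ℝ} (hu : -1 < u) :
    HasDerivAt (fun v : ℝ => v + (1 + v)⁻¹) (1 - ((1 + u) ^ 2)⁻¹) u := by
  have h1 : (1 : ℝ) + u ≠ 0 := by linarith
  have hinv : HasDerivAt (fun v : ℝ => (1 + v)⁻¹) (-1 / (1 + u) ^ 2) u :=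
    ((hasDerivAt_id u).const_add 1).inv h1
  have := (hasDerivAt_id u).add hinv
  refine this.congr_deriv ?_
  ring

lemma psiAux_deriv_ev {u : ℝ} (hu : 0 < u) :
    deriv psiAux =ᶠ[nhds u] fun v => v + (1 + v)⁻¹ := by
  filter_upwards [Ioi_mem_nhds (show (-1 : ℝ) < u by linarith)] with v hv
  exact (psiAux_hasDeriv hv).deriv

lemma psiAux_convex : ConvexOn ℝ (Set.Ici (0 : ℝ)) psiAux := by
  apply convexOn_of_deriv2_nonneg (convex_Ici 0)
  · intro u hu
    have : (-1 : ℝ) < u := by simp at hu; linarith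
    exact (psiAux_hasDeriv this).continuousAt.continuousWithinAt
  · rw [interior_Ici]
    intro u hu
    have : (-1 : ℝ) < u := by simp at hu; linarith
    exact (psiAux_hasDeriv this).differentiableAt.differentiableWithinAt
  · rw [interior_Ici]
    intro u hu
    have hu' : (0 : ℝ) < u := hu
    have h1 : (-1 : ℝ) < u := by linarith
    exact ((deriv_formula_hasDeriv h1).congr_of_eventuallyEq
      (psiAux_deriv_ev hu')).differentiableAt.differentiableWithinAt
  · rw [interior_Ici]
    intro u hu
    have hu' : (0 : ℝ) < u := hu
    have h1 : (-1 : ℝ) < u := by linarith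
    have e1 : deriv (deriv psiAux) u = deriv (fun v => v + (1 + v)⁻¹) u :=
      (psiAux_deriv_ev hu').deriv_eq
    have e2 : deriv (fun v : ℝ => v + (1 + v)⁻¹) u = 1 - ((1 + u) ^ 2)⁻¹ :=
      (deriv_formula_hasDeriv h1).deriv
    have h2 : (1 : ℝ) ≤ (1 + u) ^ 2 := by nlinarith
    have h3 : ((1 + u) ^ 2)⁻¹ ≤ 1 := inv_le_one_of_one_le₀ h2
    show 0 ≤ deriv^[2] psiAux u
    simp only [Function.iterate_succ, Function.iterate_zero, Function.comp_apply, id_eq]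
    rw [e1, e2]
    linarith

lemma psiAux_mono : MonotoneOn psiAux (Set.Ici (0 : ℝ)) := by
  intro a ha b hb hab
  have ha' : (0 : ℝ) ≤ a := ha
  unfold psiAux
  have h1 : a ^ 2 ≤ b ^ 2 := by nlinarith
  have h2 : Real.log (1 + a) ≤ Real.log (1 + b) :=
    Real.log_le_log (by linarith) (by linarith)
  linarith

lemma phi_convex (eps : ℝ) (heps : 0 < eps) :
    ConvexOn ℝ Set.univ (fun x : ℝ => psiAux (|x| / eps)) := by
  refine ⟨convex_univ, ?_⟩
  intro a _ b _ s t hs ht hst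
  simp only [smul_eq_mul]
  have habs : |s * a + t * b| ≤ s * |a| + t * |b| := by
    calc |s * a + t * b| ≤ |s * a| + |t * b| := abs_add_le _ _
      _ = s * |a| + t * |b| := by rw [abs_mul, abs_mul, abs_of_nonneg hs, abs_of_nonneg ht]
  have h1 : |s * a + t * b| / eps ≤ s * (|a| / eps) + t * (|b| / eps) := by
    rw [div_le_iff₀ heps]
    calc |s * a + t * b| ≤ s * |a| + t * |b| := habs
      _ = (s * (|a| / eps) + t * (|b| / eps)) * eps := by field_simp
  have m1 : |s * a + t * b| / eps ∈ Set.Ici (0 : ℝ) :=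
    div_nonneg (abs_nonneg _) heps.le
  have m2 : s * (|a| / eps) + t * (|b| / eps) ∈ Set.Ici (0 : ℝ) := by
    have ha := div_nonneg (abs_nonneg a) heps.le
    have hb := div_nonneg (abs_nonneg b) heps.le
    have : (0:ℝ) ≤ s * (|a| / eps) + t * (|b| / eps) := by positivity
    exact this
  have ma : |a| / eps ∈ Set.Ici (0 : ℝ) := div_nonneg (abs_nonneg _) heps.le
  have mb : |b| / eps ∈ Set.Ici (0 : ℝ) := div_nonneg (abs_nonneg _) heps.le
  calc psiAux (|s * a + t * b| / eps) ≤ psiAux (s * (|a| / eps) + t * (|b| / eps)) :=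
        psiAux_mono m1 m2 h1
    _ ≤ s * psiAux (|a| / eps) + t * psiAux (|b| / eps) := by
        have := psiAux_convex.2 ma mb hs ht hst
        simpa using this

/-- For λ>0, ε>0 with √λ < ε, the function
h(x) = x²/2 + λ·log(1 + |x|/ε) is α-strongly convex with α = 1 - λ/ε²:
for all x, y and any subgradient g of h at x,
h(y) ≥ h(x) + g·(y-x) + (α/2)(y-x)². -/
theorem stmt_0 (lam eps : ℝ) (hlam : 0 < lam) (heps : 0 < eps)
    (hle : Real.sqrt lam < eps)
    (h : ℝ → ℝ) (hdef : ∀ x, h x = x ^ 2 / 2 + lam * Real.log (1 + |x| / eps)) :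
    ∀ x y g : ℝ, (∀ z, h z ≥ h x + g * (z - x)) →
      h y ≥ h x + g * (y - x) + ((1 - lam / eps ^ 2) / 2) * (y - x) ^ 2 := by
  intro x y g hsub
  set α : ℝ := 1 - lam / eps ^ 2 with hαdef
  have heps2 : (0 : ℝ) < eps ^ 2 := by positivity
  have hlam_lt : lam < eps ^ 2 := by
    have h1 : Real.sqrt lam ^ 2 < eps ^ 2 := by
      apply pow_lt_pow_left₀ hle (Real.sqrt_nonneg _)
      norm_num
    rwa [Real.sq_sqrt hlam.le] at h1
  have hα : 0 < α := by
    rw [hαdef]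
    have : lam / eps ^ 2 < 1 := (div_lt_one heps2).mpr hlam_lt
    linarith
  -- h z - (α/2) z² = lam * ψ(|z|/eps)
  have hφeq : ∀ z : ℝ, h z - α / 2 * z ^ 2 = lam * psiAux (|z| / eps) := by
    intro z
    rw [hdef z]
    unfold psiAux
    have hz : |z| ^ 2 = z ^ 2 := sq_abs z
    rw [hαdef, div_pow, hz]
    field_simp
    ring
  have hφconv : ConvexOn ℝ Set.univ (fun z : ℝ => h z - α / 2 * z ^ 2) := by
    have := (phi_convex eps heps).smul hlam.le
    refine this.congr ?_
    intro z _
    simp [hφeq z, smul_eq_mul]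
  -- key step for each t ∈ (0,1)
  have key : ∀ t : ℝ, 0 < t → t < 1 →
      α / 2 * (1 - t) * (y - x) ^ 2 ≤ h y - h x - g * (y - x) := by
    intro t ht0 ht1
    have hconv := hφconv.2 (Set.mem_univ y) (Set.mem_univ x) ht0.le
      (by linarith : (0:ℝ) ≤ 1 - t) (by ring)
    simp only [smul_eq_mul] at hconv
    have hc : t * y + (1 - t) * x = x + t * (y - x) := by ring
    rw [hc] at hconv
    have hs := hsub (x + t * (y - x))
    -- hconv : h (x + t(y-x)) - α/2 (x+t(y-x))² ≤ t (h y - α/2 y²) + (1-t)(h x - α/2 x²)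
    -- hs : h (x + t(y-x)) ≥ h x + g * (t*(y-x))
    have hmul : t * (α / 2 * (1 - t) * (y - x) ^ 2) ≤ t * (h y - h x - g * (y - x)) := by
      nlinarith [hconv, hs]
    exact le_of_mul_le_mul_left hmul ht0
  have hc0 : 0 ≤ α / 2 * (y - x) ^ 2 := by positivity
  have hfinal : α / 2 * (y - x) ^ 2 ≤ h y - h x - g * (y - x) := by
    apply le_of_forall_pos_le_add
    intro δ hδ
    set c : ℝ := α / 2 * (y - x) ^ 2 with hcdef
    set t : ℝ := min (δ / (c + 1)) (1 / 2) with htdef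
    have hc1 : (0 : ℝ) < c + 1 := by linarith
    have ht0 : 0 < t := lt_min (div_pos hδ hc1) (by norm_num)
    have ht1 : t < 1 := lt_of_le_of_lt (min_le_right _ _) (by norm_num)
    have hkey := key t ht0 ht1
    have htle : t ≤ δ / (c + 1) := min_le_left _ _
    have hct : c * t ≤ δ := by
      have h2 : c * t ≤ c * (δ / (c + 1)) := by
        apply mul_le_mul_of_nonneg_left htle hc0
      have h3 : c * (δ / (c + 1)) ≤ δ := by
        have hq : 0 ≤ δ / (c + 1) := div_nonneg hδ.le hc1.le
        have he : (c + 1) * (δ / (c + 1)) = δ := by field_simp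
        nlinarith [mul_le_mul_of_nonneg_right (show c ≤ c + 1 by linarith) hq]
      linarith
    nlinarith [hkey]
  linarith
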